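/- Let n_1 be a Carmichael number of even index (class A) and n_2 a Carmichael number of odd index (class B), with gcd(n_1, n_2) = 1, and suppose v_2(n_1 − 1) = v_2(n_2 − 1). If the product n = n_1 n_2 is a Carmichael number, then n has even index (is in class A). -/

import Mathlib

open scoped Classical

/-- The Carmichael lambda function: the least `ℓ > 0` with `a ^ ℓ ≡ 1 (mod n)`
for all `a` coprime to `n`. -/
noncomputable def carmichaelLambda (n : ℕ) : ℕ :=
  sInf {ℓ : ℕ | 0 < ℓ ∧ ∀ a : ℕ, Nat.Coprime a n → a ^ ℓ ≡ 1 [MOD n]}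

/-- A Carmichael number: a composite `n` with `a ^ (n-1) ≡ 1 (mod n)`
for all `a` coprime to `n`. -/
def IsCarmichael (n : ℕ) : Prop :=
  1 < n ∧ ¬ n.Prime ∧ ∀ a : ℕ, Nat.Coprime a n → a ^ (n - 1) ≡ 1 [MOD n]

/-- The Euler liars for `n`, as residues in `{0, …, n-1}` coprime to `n` with
`(a/n) ≡ a ^ ((n-1)/2) (mod n)`. -/
noncomputable def eulerLiars (n : ℕ) : Finset ℕ :=
  (Finset.range n).filter
    (fun a => Nat.Coprime a n ∧ (jacobiSym (a : ℤ) n ≡ (a : ℤ) ^ ((n - 1) / 2) [ZMOD n]))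

lemma carmichaelLambda_mem {n ℓ : ℕ} (h : 0 < ℓ)
    (h2 : ∀ a : ℕ, Nat.Coprime a n → a ^ ℓ ≡ 1 [MOD n]) :
    0 < carmichaelLambda n ∧
      ∀ a : ℕ, Nat.Coprime a n → a ^ carmichaelLambda n ≡ 1 [MOD n] := by
  have hne : {ℓ : ℕ | 0 < ℓ ∧ ∀ a : ℕ, Nat.Coprime a n → a ^ ℓ ≡ 1 [MOD n]}.Nonempty :=
    ⟨ℓ, h, h2⟩
  exact Nat.sInf_mem hne

lemma carmichaelLambda_dvd {n ℓ : ℕ} (h : 0 < ℓ)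
    (h2 : ∀ a : ℕ, Nat.Coprime a n → a ^ ℓ ≡ 1 [MOD n]) :
    carmichaelLambda n ∣ ℓ := by
  obtain ⟨hpos, hprop⟩ := carmichaelLambda_mem h h2
  set m := carmichaelLambda n with hm
  rcases Nat.eq_zero_or_pos (ℓ % m) with hr | hr
  · exact Nat.dvd_of_mod_eq_zero hr
  · exfalso
    have hmem : (ℓ % m) ∈ {ℓ : ℕ | 0 < ℓ ∧ ∀ a : ℕ, Nat.Coprime a n → a ^ ℓ ≡ 1 [MOD n]} := by
      refine ⟨hr, fun a ha => ?_⟩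
      have h1 : a ^ ℓ ≡ 1 [MOD n] := h2 a ha
      have h3 : a ^ (m * (ℓ / m)) ≡ 1 [MOD n] := by
        rw [pow_mul]
        simpa using (hprop a ha).pow (ℓ / m)
      have h4 : a ^ (m * (ℓ / m)) * a ^ (ℓ % m) ≡ 1 * a ^ (ℓ % m) [MOD n] :=
        h3.mul_right _
      have h5 : a ^ (m * (ℓ / m)) * a ^ (ℓ % m) = a ^ ℓ := by
        rw [← pow_add, Nat.mul_comm, Nat.div_add_mod']
      rw [h5, one_mul] at h4
      exact h4.symm.trans h1
    have : m ≤ ℓ % m := Nat.sInf_le hmem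
    exact absurd this (not_le.mpr (Nat.mod_lt _ hpos))

lemma carmichaelLambda_dvd_sub_one {n : ℕ} (hc : IsCarmichael n) :
    carmichaelLambda n ∣ n - 1 :=
  carmichaelLambda_dvd (by have := hc.1; omega) hc.2.2

lemma carmichaelLambda_pos {n : ℕ} (hc : IsCarmichael n) :
    0 < carmichaelLambda n :=
  (carmichaelLambda_mem (show 0 < n - 1 by have := hc.1; omega) hc.2.2).1

/-- If `n₁` is a class-A Carmichael number, `n₂` a class-B Carmichael number,
`gcd(n₁, n₂) = 1` and `v₂(n₁-1) = v₂(n₂-1)`, then if `n₁ n₂` is a Carmichael number it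
has even index (is in class A). -/
theorem product_classA_of_classA_classB (n₁ n₂ : ℕ)
    (hc₁ : IsCarmichael n₁) (hc₂ : IsCarmichael n₂) (hcop : Nat.gcd n₁ n₂ = 1)
    (he₁ : Even ((n₁ - 1) / carmichaelLambda n₁))
    (ho₂ : Odd ((n₂ - 1) / carmichaelLambda n₂))
    (hv : padicValNat 2 (n₁ - 1) = padicValNat 2 (n₂ - 1))
    (hn : IsCarmichael (n₁ * n₂)) :
    Even ((n₁ * n₂ - 1) / carmichaelLambda (n₁ * n₂)) := by
  have h2 : Fact (Nat.Prime 2) := ⟨Nat.prime_two⟩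
  set l₁ := carmichaelLambda n₁ with hl₁
  set l₂ := carmichaelLambda n₂ with hl₂
  set L := carmichaelLambda (n₁ * n₂) with hL
  have hn₁ : 1 < n₁ := hc₁.1
  have hn₂ : 1 < n₂ := hc₂.1
  have hl₁pos : 0 < l₁ := carmichaelLambda_pos hc₁
  have hl₂pos : 0 < l₂ := carmichaelLambda_pos hc₂
  have hd₁ : l₁ ∣ n₁ - 1 := carmichaelLambda_dvd_sub_one hc₁
  have hd₂ : l₂ ∣ n₂ - 1 := carmichaelLambda_dvd_sub_one hc₂
  have hcop' : Nat.Coprime n₁ n₂ := hcop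
  -- L divides lcm l₁ l₂
  have hlcm_pos : 0 < Nat.lcm l₁ l₂ := Nat.lcm_pos hl₁pos hl₂pos
  have hLdvd : L ∣ Nat.lcm l₁ l₂ := by
    refine carmichaelLambda_dvd hlcm_pos (fun a ha => ?_)
    have ha₁ : Nat.Coprime a n₁ := Nat.Coprime.coprime_dvd_right ⟨n₂, rfl⟩ ha
    have ha₂ : Nat.Coprime a n₂ := Nat.Coprime.coprime_dvd_right ⟨n₁, Nat.mul_comm _ _⟩ ha
    have hp₁ : a ^ l₁ ≡ 1 [MOD n₁] :=
      (carmichaelLambda_mem (show 0 < n₁ - 1 by omega) hc₁.2.2).2 a ha₁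
    have hp₂ : a ^ l₂ ≡ 1 [MOD n₂] :=
      (carmichaelLambda_mem (show 0 < n₂ - 1 by omega) hc₂.2.2).2 a ha₂
    obtain ⟨k₁, hk₁⟩ := Nat.dvd_lcm_left l₁ l₂
    obtain ⟨k₂, hk₂⟩ := Nat.dvd_lcm_right l₁ l₂
    have e₁ : a ^ Nat.lcm l₁ l₂ ≡ 1 [MOD n₁] := by
      rw [hk₁, pow_mul]; simpa using hp₁.pow k₁
    have e₂ : a ^ Nat.lcm l₁ l₂ ≡ 1 [MOD n₂] := by
      rw [hk₂, pow_mul]; simpa using hp₂.pow k₂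
    exact (Nat.modEq_and_modEq_iff_modEq_mul hcop').mp ⟨e₁, e₂⟩
  -- valuations
  set v := padicValNat 2 (n₁ - 1) with hvdef
  obtain ⟨i₁, hi₁⟩ := hd₁
  obtain ⟨i₂, hi₂⟩ := hd₂
  have hi₁pos : 0 < i₁ := by
    rcases Nat.eq_zero_or_pos i₁ with h | h
    · rw [h, Nat.mul_zero] at hi₁; omega
    · exact h
  have hi₂pos : 0 < i₂ := by
    rcases Nat.eq_zero_or_pos i₂ with h | h
    · rw [h, Nat.mul_zero] at hi₂; omega
    · exact h
  rw [hi₁, Nat.mul_div_cancel_left _ hl₁pos] at he₁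
  rw [hi₂, Nat.mul_div_cancel_left _ hl₂pos] at ho₂
  have hv₁ : padicValNat 2 l₁ < v := by
    have : v = padicValNat 2 l₁ + padicValNat 2 i₁ := by
      rw [hvdef, hi₁, padicValNat.mul (by omega) (by omega)]
    have hi₁v : 1 ≤ padicValNat 2 i₁ :=
      one_le_padicValNat_of_dvd hi₁pos.ne' he₁.two_dvd
    omega
  have hv₂ : padicValNat 2 l₂ = v := by
    have h0 : padicValNat 2 i₂ = 0 :=
      padicValNat.eq_zero_of_not_dvd (by simpa [Nat.odd_iff, Nat.two_dvd_ne_zero] using ho₂)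
    have : padicValNat 2 (n₂ - 1) = padicValNat 2 l₂ + padicValNat 2 i₂ := by
      rw [hi₂, padicValNat.mul (by omega) (by omega)]
    omega
  -- v₂(lcm) = v
  have hvlcm : padicValNat 2 (Nat.lcm l₁ l₂) = v := by
    have := Nat.factorization_lcm (by omega : l₁ ≠ 0) (by omega : l₂ ≠ 0)
    have h := DFunLike.congr_fun this 2
    simp only [Finsupp.sup_apply] at h
    rw [Nat.factorization_def _ Nat.prime_two, Nat.factorization_def _ Nat.prime_two,
      Nat.factorization_def _ Nat.prime_two] at h
    rw [h, hv₂]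
    omega
  have hLpos : 0 < L := carmichaelLambda_pos hn
  have hvL : padicValNat 2 L ≤ v := by
    have : (2 : ℕ) ^ padicValNat 2 L ∣ Nat.lcm l₁ l₂ :=
      dvd_trans pow_padicValNat_dvd hLdvd
    rw [padicValNat_dvd_iff_le (by omega)] at this
    omega
  -- 2^(v+1) ∣ n₁ n₂ - 1
  have hv1 : 1 ≤ v := by omega
  have hA : (2 : ℕ) ^ v ∣ n₁ - 1 := pow_padicValNat_dvd
  have hB : (2 : ℕ) ^ v ∣ n₂ - 1 := hv ▸ pow_padicValNat_dvd
  obtain ⟨a, ha⟩ := hA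
  obtain ⟨b, hb⟩ := hB
  have hao : ¬ 2 ∣ a := by
    intro h
    obtain ⟨a', ha'⟩ := h
    have : (2:ℕ) ^ (v+1) ∣ n₁ - 1 := ⟨a', by rw [ha, ha', pow_succ]; ring⟩
    rw [padicValNat_dvd_iff_le (by omega)] at this
    omega
  have hbo : ¬ 2 ∣ b := by
    intro h
    obtain ⟨b', hb'⟩ := h
    have : (2:ℕ) ^ (v+1) ∣ n₂ - 1 := ⟨b', by rw [hb, hb', pow_succ]; ring⟩
    rw [padicValNat_dvd_iff_le (by omega)] at this
    rw [← hv] at this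
    omega
  have hn₂odd : ¬ 2 ∣ n₂ := by
    have : (2:ℕ) ∣ n₂ - 1 := dvd_trans (dvd_pow_self 2 (by omega)) ⟨b, hb⟩
    omega
  have hprod : n₁ * n₂ - 1 = (n₁ - 1) * n₂ + (n₂ - 1) := by
    have : 1 ≤ n₁ := by omega
    have : 1 ≤ n₂ := by omega
    cases n₁ with
    | zero => omega
    | succ m => cases n₂ with
      | zero => omega
      | succ k => simp [Nat.succ_sub_one]; ring_nf; omega
  have hsum : (2:ℕ) ^ (v+1) ∣ n₁ * n₂ - 1 := by
    rw [hprod, ha, hb]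
    have : a * n₂ + b = 2 * ((a * n₂ + b) / 2) := by
      have he : 2 ∣ a * n₂ + b := by
        rcases Nat.even_or_odd (a * n₂) with h | h
        · exact absurd (by
            rcases Nat.even_mul.mp h with h' | h'
            · exact absurd h'.two_dvd hao
            · exact absurd h'.two_dvd hn₂odd) (fun x => x)
        · have hbodd : Odd b := Nat.odd_iff.mpr (by omega)
          exact (h.add_odd hbodd).two_dvd
      omega
    refine ⟨(a * n₂ + b) / 2, ?_⟩
    rw [pow_succ]
    calc 2 ^ v * a * n₂ + 2 ^ v * b = 2 ^ v * (a * n₂ + b) := by ring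
      _ = 2 ^ v * (2 * ((a * n₂ + b) / 2)) := by rw [← this]
      _ = 2 ^ v * 2 * ((a * n₂ + b) / 2) := by ring
  -- conclude
  obtain ⟨q, hq⟩ := carmichaelLambda_dvd_sub_one hn
  rw [hq, Nat.mul_div_cancel_left _ hLpos]
  have hqpos : 0 < q := by
    rcases Nat.eq_zero_or_pos q with h | h
    · rw [h, Nat.mul_zero] at hq
      have : 1 < n₁ * n₂ := hn.1
      omega
    · exact h
  have hval : padicValNat 2 (n₁ * n₂ - 1) = padicValNat 2 L + padicValNat 2 q := by
    rw [hq, padicValNat.mul (by omega) (by omega)]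
  have hge : v + 1 ≤ padicValNat 2 (n₁ * n₂ - 1) := by
    rw [← padicValNat_dvd_iff_le (show n₁*n₂ - 1 ≠ 0 by have := hn.1; omega)]
    exact hsum
  have : 1 ≤ padicValNat 2 q := by omega
  exact (even_iff_two_dvd).mpr (dvd_of_one_le_padicValNat this)
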